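/- Let K be an algebraically closed field of characteristic 0 equipped with a nontrivial non-Archimedean absolute value of residue characteristic 0 or greater than d, and let f be a polynomial of degree d ≥ 2 over K whose fixed-point multipliers λ₁, …, λ_d all differ from 1 (counted with multiplicity). Then max_j |λ_j| ≥ 1. -/

import Mathlib

open Polynomial Finset

/-- Key algebraic identity: the sum of Lagrange nodal weights vanishes when there
are at least two nodes. -/
lemma sum_nodalWeight_eq_zero {F : Type*} [Field F] [DecidableEq F]
    (s : Finset F) (h2 : 2 ≤ s.card) :
    ∑ i ∈ s, Lagrange.nodalWeight s id i = 0 := by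
  have hinj : Set.InjOn (id : F → F) s := Function.injective_id.injOn
  have hne : s.Nonempty := Finset.card_pos.mp (by omega)
  have hsum := Lagrange.sum_basis hinj hne
  have hco := congrArg (fun p : F[X] => p.coeff (s.card - 1)) hsum
  simp only [finset_sum_coeff, coeff_one] at hco
  have hcard1 : s.card - 1 ≠ 0 := by omega
  rw [if_neg hcard1] at hco
  rw [← hco]
  refine Finset.sum_congr rfl fun i hi => ?_
  rw [Lagrange.basis_eq_prod_sub_inv_mul_nodal_div hi,
    ← Lagrange.nodal_erase_eq_nodal_div hi, coeff_C_mul]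
  have hdeg : (Lagrange.nodal (s.erase i) (id : F → F)).natDegree = s.card - 1 := by
    rw [Lagrange.natDegree_nodal, Finset.card_erase_of_mem hi]
  rw [show s.card - 1 = (Lagrange.nodal (s.erase i) (id : F → F)).natDegree from hdeg.symm,
    Lagrange.nodal_monic.coeff_natDegree, mul_one]

/-- Ultrametric bound for finite sums. -/
lemma na_sum_lt_one {K : Type*} [Field K] (v : AbsoluteValue K ℝ)
    (hna : IsNonarchimedean ⇑v) {ι : Type*} (s : Finset ι) (g : ι → K)
    (h : ∀ i ∈ s, v (g i) < 1) : v (∑ i ∈ s, g i) < 1 := by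
  classical
  induction s using Finset.cons_induction with
  | empty => simpa using zero_lt_one
  | cons a s ha ih =>
    rw [Finset.sum_cons]
    refine lt_of_le_of_lt (hna _ _) (max_lt (h a (Finset.mem_cons_self a s)) ?_)
    exact ih fun i hi => h i (Finset.mem_cons_of_mem hi)

/-- Over an algebraically closed field of characteristic zero with a nontrivial
non-Archimedean absolute value whose residue characteristic is `0` or greater than `d`
(equivalently `|n| = 1` for `1 ≤ n ≤ d`), a degree-`d` polynomial all of whose
fixed-point multipliers differ from `1` has a fixed-point multiplier of absolute value
at least `1`. -/
theorem stmt_6 {K : Type*} [Field K] [IsAlgClosed K] [CharZero K]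
    (v : AbsoluteValue K ℝ) (hna : IsNonarchimedean ⇑v)
    (hnontriv : ∃ x : K, x ≠ 0 ∧ v x ≠ 1)
    (d : ℕ) (hd : 2 ≤ d)
    (hres : ∀ n : ℕ, 1 ≤ n → n ≤ d → v (n : K) = 1)
    (f : K[X]) (hdeg : f.natDegree = d)
    (hmult : ∀ z ∈ (f - X).roots, (derivative f).eval z ≠ 1) :
    ∃ z ∈ (f - X).roots, 1 ≤ v ((derivative f).eval z) := by
  classical
  by_contra hcon
  push_neg at hcon
  set g : K[X] := f - X with hg
  -- degree of g
  have hgdeg : g.natDegree = d := by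
    rw [hg]
    rw [natDegree_sub_eq_left_of_natDegree_lt]
    · exact hdeg
    · rw [natDegree_X, hdeg]; omega
  have hg0 : g ≠ 0 := fun h => by simp [h] at hgdeg; omega
  -- derivative of g
  have hderiv : derivative g = derivative f - 1 := by
    rw [hg, derivative_sub, derivative_X]
  have hderiv_eval : ∀ z : K, (derivative g).eval z = (derivative f).eval z - 1 := by
    intro z; rw [hderiv]; simp
  -- all roots of g are simple
  have hnodup : g.roots.Nodup := by
    rw [Multiset.nodup_iff_count_le_one]
    intro z
    by_contra hcnt
    push_neg at hcnt
    have hcnt2 : 2 ≤ g.roots.count z := hcnt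
    have hzr : z ∈ g.roots := Multiset.count_pos.mp (by omega)
    have hrm : 2 ≤ g.rootMultiplicity z := by rwa [← count_roots]
    have h1 : 1 ≤ (derivative g).rootMultiplicity z := by
      have := rootMultiplicity_sub_one_le_derivative_rootMultiplicity g z
      omega
    have hdz : (derivative g).eval z = 0 := by
      by_cases hdg : derivative g = 0
      · rw [hdg]; simp
      · exact (rootMultiplicity_pos hdg).mp (by omega)
    rw [hderiv_eval] at hdz
    exact hmult z hzr (sub_eq_zero.mp hdz)
  -- the finset of roots
  set s : Finset K := g.roots.toFinset with hs
  have hsval : s.val = g.roots := by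
    rw [hs, Multiset.toFinset_val, Multiset.dedup_eq_self.mpr hnodup]
  have hroots_card : Multiset.card g.roots = d := by
    have h1 : Multiset.card g.roots = g.natDegree :=
      splits_iff_card_roots.mp (IsAlgClosed.splits g)
    rw [h1, hgdeg]
  have hscard : s.card = d := by rw [Finset.card_def, hsval]; exact hroots_card
  -- factorization of g
  set c : K := g.leadingCoeff with hc
  have hc0 : c ≠ 0 := leadingCoeff_ne_zero.mpr hg0
  have hfact : C c * Lagrange.nodal s id = g := by
    have h := C_leadingCoeff_mul_prod_multiset_X_sub_C
      (p := g) (by rw [hroots_card, hgdeg])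
    rw [← h]
    congr 1
    rw [Lagrange.nodal, ← hsval, Finset.prod_eq_multiset_prod]
    rfl
  -- evaluation of g' at roots
  have hdg_eval : ∀ z ∈ s, (derivative g).eval z
      = c * (Lagrange.nodal (s.erase z) (id : K → K)).eval z := by
    intro z hz
    rw [← hfact, derivative_C_mul, eval_mul, eval_C]
    congr 1
    exact Lagrange.eval_nodal_derivative_eval_node_eq (v := (id : K → K)) hz
  have hinv_eval : ∀ z ∈ s, ((derivative g).eval z)⁻¹
      = c⁻¹ * Lagrange.nodalWeight s id z := by
    intro z hz
    rw [hdg_eval z hz, mul_inv, Lagrange.nodalWeight_eq_eval_nodal_erase_inv]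
    rfl
  -- the fixed point formula: sum of 1/g'(z) over roots is zero
  have hsum0 : ∑ z ∈ s, ((derivative g).eval z)⁻¹ = 0 := by
    rw [Finset.sum_congr rfl hinv_eval, ← Finset.mul_sum,
      sum_nodalWeight_eq_zero s (by omega), mul_zero]
  -- absolute value of g'(z) equals 1 at each root
  have hone : ∀ z ∈ s, v ((derivative g).eval z) = 1 := by
    intro z hz
    have hzr : z ∈ g.roots := Multiset.mem_toFinset.mp hz
    have hlt : v ((derivative f).eval z) < 1 := hcon z hzr
    rw [hderiv_eval]
    set lam : K := (derivative f).eval z with hlam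
    have hub : v (lam - 1) ≤ 1 := by
      have h := hna lam (-1)
      rw [← sub_eq_add_neg, v.map_neg, v.map_one] at h
      exact h.trans (max_le hlt.le le_rfl)
    have hlb : (1 : ℝ) ≤ v (lam - 1) := by
      have h2 := hna lam (-(lam - 1))
      have heq : lam + -(lam - 1) = 1 := by ring
      rw [heq, v.map_neg, v.map_one] at h2
      rcases max_cases (v lam) (v (lam - 1)) with ⟨he, _⟩ | ⟨he, _⟩ <;>
        rw [he] at h2 <;> linarith
    linarith
  have hne0 : ∀ z ∈ s, (derivative g).eval z ≠ 0 := by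
    intro z hz h0
    have := hone z hz
    rw [h0, v.map_zero] at this
    norm_num at this
  -- rewrite each term and derive a contradiction with the ultrametric inequality
  have hsum_eps : ∑ z ∈ s, (((derivative g).eval z)⁻¹ + 1) = (d : K) := by
    rw [Finset.sum_add_distrib, hsum0, zero_add, Finset.sum_const, hscard,
      nsmul_eq_mul, mul_one]
  have heps_lt : ∀ z ∈ s, v (((derivative g).eval z)⁻¹ + 1) < 1 := by
    intro z hz
    have hzr : z ∈ g.roots := Multiset.mem_toFinset.mp hz
    have hkey : ((derivative g).eval z)⁻¹ + 1
        = ((derivative g).eval z)⁻¹ * (derivative f).eval z := by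
      have hsub : (derivative f).eval z - 1 ≠ 0 := by
        rw [← hderiv_eval]; exact hne0 z hz
      rw [hderiv_eval]
      field_simp
      ring
    rw [hkey, v.map_mul, map_inv₀, hone z hz]
    simpa using hcon z hzr
  have hfinal : v ((d : K)) < 1 := by
    rw [← hsum_eps]
    exact na_sum_lt_one v hna s _ heps_lt
  rw [hres d (by omega) le_rfl] at hfinal
  norm_num at hfinal
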